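/- Let a be a prime number and p an integer such that p ≢ 0 (mod a), p ≢ −2a+1 (mod a²), and p ≢ −2a−1 (mod a²). Let λ(t) = a·t² − (2a+p)·t + a ∈ ℚ[t]. Then for every positive integer r, the polynomial λ(t^r) = a·t^{2r} − (2a+p)·t^r + a is irreducible in ℚ[t]. -/

import Mathlib

open Polynomial

lemma special_index (a : ℕ) (ha : a.Prime) (g : ℤ[X]) (r : ℕ)
    (hdvd : g.map (Int.castRingHom (ZMod a)) ∣ X ^ r) :
    ∃ i ≤ r, (¬ (a:ℤ) ∣ g.coeff i) ∧ (∀ k, k ≠ i → (a:ℤ) ∣ g.coeff k) ∧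
      (g.map (Int.castRingHom (ZMod a))).natDegree = i := by
  haveI := Fact.mk ha
  obtain ⟨i, hir, hass⟩ := (dvd_prime_pow Polynomial.prime_X r).mp hdvd
  obtain ⟨u, hu⟩ := hass.symm
  rcases Polynomial.isUnit_iff.mp u.isUnit with ⟨c, hc, hC⟩
  have hg : g.map (Int.castRingHom (ZMod a)) = C c * X ^ i := by
    rw [← hu, ← hC]; ring
  have hcoeff : ∀ k, ((g.coeff k : ZMod a)) = if k = i then c else 0 := by
    intro k
    have := congrArg (fun q => Polynomial.coeff q k) hg
    simpa [Polynomial.coeff_map, Polynomial.coeff_C_mul, Polynomial.coeff_X_pow,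
      eq_comm] using this
  refine ⟨i, hir, ?_, ?_, ?_⟩
  · rw [← ZMod.intCast_zmod_eq_zero_iff_dvd, hcoeff i, if_pos rfl]
    exact hc.ne_zero
  · intro k hk
    rw [← ZMod.intCast_zmod_eq_zero_iff_dvd, hcoeff k, if_neg hk]
  · rw [hg, natDegree_C_mul hc.ne_zero, natDegree_X_pow]

section
variable (a : ℕ) (p : ℤ) (r : ℕ)

noncomputable def Fpoly : ℤ[X] := C (a:ℤ) * X ^ (2*r) - C (2*(a:ℤ)+p) * X ^ r + C (a:ℤ)

variable (hr : 0 < r)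
include hr

lemma Fpoly_coeff_zero : (Fpoly a p r).coeff 0 = (a:ℤ) := by
  have h1 : r ≠ 0 := hr.ne'
  have h2 : 2*r ≠ 0 := by omega
  unfold Fpoly
  generalize (2*(a:ℤ)+p) = q
  simp [coeff_X_pow, h1, h2, Ne.symm h1, Ne.symm h2]

lemma Fpoly_coeff_r : (Fpoly a p r).coeff r = -(2*(a:ℤ)+p) := by
  have h3 : 2*r ≠ r := by omega
  unfold Fpoly
  generalize (2*(a:ℤ)+p) = q
  simp [coeff_X_pow, hr.ne', h3, Ne.symm hr.ne']

lemma Fpoly_coeff_two_r : (Fpoly a p r).coeff (2*r) = (a:ℤ) := by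
  have h2 : 2*r ≠ 0 := by omega
  have h3 : 2*r ≠ r := by omega
  unfold Fpoly
  generalize (2*(a:ℤ)+p) = q
  simp [coeff_X_pow, h2, h3, Ne.symm h3]

lemma Fpoly_natDegree (ha : a ≠ 0) : (Fpoly a p r).natDegree = 2*r := by
  unfold Fpoly
  compute_degree!
  all_goals try omega

omit hr in
lemma Fpoly_map_zmod :
    (Fpoly a p r).map (Int.castRingHom (ZMod a)) = C (-(p : ZMod a)) * X ^ r := by
  unfold Fpoly
  have h : ((a : ℤ) : ZMod a) = 0 := by
    simp [ZMod.intCast_zmod_eq_zero_iff_dvd]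
  push_cast [Polynomial.map_add, Polynomial.map_sub, Polynomial.map_mul, Polynomial.map_pow,
    map_C, map_X]
  rw [show ((a:ℤ) : ZMod a) = 0 from h] at *
  simp

end

section Main
variable {a : ℕ} {p : ℤ} {r : ℕ}

/-- the main case: g has unit constant term mod a, h has unit top (r-th) coeff mod a,
both of degree r; derive p ≡ -2a ∓ 1 mod a². -/
lemma main_case (ha : a.Prime) (hr : 0 < r) (g h : ℤ[X])
    (hgh : g * h = Fpoly a p r)
    (hg0 : ¬ (a:ℤ) ∣ g.coeff 0) (hgk : ∀ k, k ≠ 0 → (a:ℤ) ∣ g.coeff k)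
    (hhr : ¬ (a:ℤ) ∣ h.coeff r) (hhk : ∀ k, k ≠ r → (a:ℤ) ∣ h.coeff k)
    (hgd : g.natDegree ≤ r) (hhd : h.natDegree ≤ r) :
    ∃ ε : ℤ, (ε = 1 ∨ ε = -1) ∧ ((a:ℤ)^2 ∣ (-(2*(a:ℤ)+p) - ε)) := by
  have hane : (a:ℤ) ≠ 0 := Int.natCast_ne_zero.mpr ha.ne_zero
  -- constant coefficients
  have hc0 : g.coeff 0 * h.coeff 0 = (a:ℤ) := by
    rw [← Polynomial.mul_coeff_zero, hgh, Fpoly_coeff_zero a p r hr]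
  have hctop : g.coeff r * h.coeff r = (a:ℤ) := by
    have := congrArg (fun q => Polynomial.coeff q (2*r)) hgh
    simp only [Fpoly_coeff_two_r a p r hr] at this
    rw [Polynomial.coeff_mul, Finset.Nat.sum_antidiagonal_eq_sum_range_succ_mk] at this
    rw [← this]
    rw [Finset.sum_eq_single r]
    · have h2 : 2*r - r = r := by omega
      rw [h2]
    · intro k hk hkr
      rcases lt_or_gt_of_ne hkr with hlt | hgt
      · have : 2*r - k > r := by omega
        rw [Polynomial.coeff_eq_zero_of_natDegree_lt (lt_of_le_of_lt hhd this)]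
        ring
      · rw [Polynomial.coeff_eq_zero_of_natDegree_lt (lt_of_le_of_lt hgd hgt)]
        ring
    · intro hmem
      exfalso; apply hmem
      simp [Finset.mem_range]; omega
  -- a ∣ h.coeff 0, hence g.coeff 0 is a unit
  have hh0 : (a:ℤ) ∣ h.coeff 0 := hhk 0 (by omega)
  have hg0u : IsUnit (g.coeff 0) := by
    obtain ⟨k, hk⟩ := hh0
    have : (a:ℤ) * (g.coeff 0 * k - 1) = 0 := by
      rw [mul_sub]; rw [hk] at hc0
      ring_nf
      ring_nf at hc0
      linarith [hc0]
    have := (mul_eq_zero.mp this).resolve_left hane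
    exact IsUnit.of_mul_eq_one k (by linarith)
  have hgr : (a:ℤ) ∣ g.coeff r := hgk r (by omega)
  have hhru : IsUnit (h.coeff r) := by
    obtain ⟨k, hk⟩ := hgr
    have : (a:ℤ) * (k * h.coeff r - 1) = 0 := by
      rw [hk] at hctop; rw [mul_sub]; ring_nf; ring_nf at hctop; linarith [hctop]
    have := (mul_eq_zero.mp this).resolve_left hane
    exact IsUnit.of_mul_eq_one k (by linarith [this])
  -- middle coefficient
  have hmid : g.coeff 0 * h.coeff r + (∑ k ∈ Finset.range r, g.coeff (k+1) * h.coeff (r - (k+1)))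
      = -(2*(a:ℤ)+p) := by
    have := congrArg (fun q => Polynomial.coeff q r) hgh
    simp only [Fpoly_coeff_r a p r hr] at this
    rw [Polynomial.coeff_mul, Finset.Nat.sum_antidiagonal_eq_sum_range_succ_mk] at this
    rw [← this, Finset.sum_range_succ']
    simp [add_comm]
  have hdvd2 : (a:ℤ)^2 ∣ (∑ k ∈ Finset.range r, g.coeff (k+1) * h.coeff (r - (k+1))) := by
    apply Finset.dvd_sum
    intro k hk
    have hk' : k < r := Finset.mem_range.mp hk
    have d1 : (a:ℤ) ∣ g.coeff (k+1) := hgk (k+1) (by omega)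
    have d2 : (a:ℤ) ∣ h.coeff (r - (k+1)) := hhk _ (by omega)
    rw [sq]
    exact mul_dvd_mul d1 d2
  refine ⟨g.coeff 0 * h.coeff r, ?_, ?_⟩
  · rcases Int.isUnit_iff.mp hg0u with h1 | h1 <;>
    rcases Int.isUnit_iff.mp hhru with h2 | h2 <;> simp [h1, h2]
  · obtain ⟨m, hm⟩ := hdvd2
    refine ⟨m, ?_⟩
    rw [← hmid, hm]; ring

end Main

section Final
variable {a : ℕ} {p : ℤ} {r : ℕ}

lemma not_unit_const_factor (ha : a.Prime) (hr : 0 < r) (hp : ¬ (a:ℤ) ∣ p)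
    (g : ℤ[X]) (hdvd : g ∣ Fpoly a p r) (hdeg : g.natDegree = 0) : IsUnit g := by
  have hgC : g = C (g.coeff 0) := Polynomial.eq_C_of_natDegree_eq_zero hdeg
  rw [hgC] at hdvd ⊢
  rw [Polynomial.isUnit_C]
  have hall := (Polynomial.C_dvd_iff_dvd_coeff _ _).mp hdvd
  have d0 : g.coeff 0 ∣ (a:ℤ) := by have := hall 0; rwa [Fpoly_coeff_zero a p r hr] at this
  have dr : g.coeff 0 ∣ -(2*(a:ℤ)+p) := by
    have := hall r; rwa [Fpoly_coeff_r a p r hr] at this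
  have hprime : Prime (a:ℤ) := Nat.prime_iff_prime_int.mp ha
  obtain ⟨c, hc⟩ := d0
  rcases hprime.irreducible.isUnit_or_isUnit hc with hu | hu
  · exact hu
  · exfalso
    apply hp
    have hag : (a:ℤ) ∣ g.coeff 0 := by
      rcases Int.isUnit_iff.mp hu with rfl | rfl
      · exact ⟨1, by linarith [hc]⟩
      · exact ⟨-1, by linarith [hc]⟩
    have h2ap : (a:ℤ) ∣ 2*(a:ℤ)+p := dvd_neg.mp (hag.trans dr)
    exact (dvd_add_right ⟨2, by ring⟩).mp h2ap

end Final

section Big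
variable {a : ℕ} {p : ℤ} {r : ℕ}

lemma Fpoly_irreducible_int (ha : a.Prime) (hr : 0 < r)
    (h0 : ¬ (a:ℤ) ∣ p)
    (h1 : ¬ (a:ℤ)^2 ∣ (p - (-2*(a:ℤ)+1)))
    (h2 : ¬ (a:ℤ)^2 ∣ (p - (-2*(a:ℤ)-1))) :
    Irreducible (Fpoly a p r) := by
  haveI := Fact.mk ha
  have hane : (a:ℤ) ≠ 0 := Int.natCast_ne_zero.mpr ha.ne_zero
  have hFdeg : (Fpoly a p r).natDegree = 2*r := Fpoly_natDegree a p r hr ha.ne_zero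
  have hFne : Fpoly a p r ≠ 0 := fun hF => by
    have := Fpoly_coeff_zero a p r hr
    rw [hF] at this; simp at this; exact ha.ne_zero (by exact_mod_cast this.symm)
  have hprime : Prime (a:ℤ) := Nat.prime_iff_prime_int.mp ha
  -- a² does not divide a
  have hsqnd : ¬ ((a:ℤ)^2 ∣ (a:ℤ)) := by
    intro ⟨k, hk⟩
    have : (a:ℤ) * (1 - (a:ℤ)*k) = 0 := by ring_nf; linarith [hk]
    rcases mul_eq_zero.mp this with h | h
    · exact hane h
    · have : (a:ℤ) ∣ 1 := ⟨k, by linarith⟩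
      have := Int.le_of_dvd one_pos this
      have h2 := ha.two_le
      omega
  constructor
  · intro hu
    have := Polynomial.natDegree_eq_zero_of_isUnit hu
    omega
  intro g h hgh
  by_contra hcon
  push_neg at hcon
  obtain ⟨hgu, hhu⟩ := hcon
  have hgh' : g * h = Fpoly a p r := hgh.symm
  have hgne : g ≠ 0 := fun hg => hFne (by rw [hgh, hg, zero_mul])
  have hhne : h ≠ 0 := fun hh => hFne (by rw [hgh, hh, mul_zero])
  have hdegsum : g.natDegree + h.natDegree = 2*r := by
    rw [← Polynomial.natDegree_mul hgne hhne, hgh', hFdeg]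
  have hm1 : 1 ≤ g.natDegree := by
    rcases Nat.eq_zero_or_pos g.natDegree with hm | hm
    · exact absurd (not_unit_const_factor ha hr h0 g ⟨h, hgh⟩ hm) hgu
    · exact hm
  have hn1 : 1 ≤ h.natDegree := by
    rcases Nat.eq_zero_or_pos h.natDegree with hn | hn
    · exact absurd (not_unit_const_factor ha hr h0 h ⟨g, by rw [hgh, mul_comm]⟩ hn) hhu
    · exact hn
  -- reduction mod a
  set φ := Int.castRingHom (ZMod a) with hφ
  have hpbar : (-(p : ZMod a)) ≠ 0 := by
    simp only [neg_ne_zero]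
    intro hz
    exact h0 ((ZMod.intCast_zmod_eq_zero_iff_dvd p a).mp hz)
  have hCunit : IsUnit (C (-(p : ZMod a))) := isUnit_C.mpr (isUnit_iff_ne_zero.mpr hpbar)
  have hmap : g.map φ * h.map φ = C (-(p : ZMod a)) * X ^ r := by
    rw [← Polynomial.map_mul, hgh', Fpoly_map_zmod]
  have hdg : g.map φ ∣ X ^ r := by
    have hd : g.map φ ∣ C (-(p : ZMod a)) * X ^ r := ⟨h.map φ, hmap.symm⟩
    exact (IsUnit.dvd_mul_left hCunit).mp hd
  have hdh : h.map φ ∣ X ^ r := by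
    have hd : h.map φ ∣ C (-(p : ZMod a)) * X ^ r := ⟨g.map φ, by rw [← hmap]; ring⟩
    exact (IsUnit.dvd_mul_left hCunit).mp hd
  obtain ⟨i, hir, hgi, hgk, hgnd⟩ := special_index a ha g r hdg
  obtain ⟨j, hjr, hhj, hhk, hhnd⟩ := special_index a ha h r hdh
  have hgmne : g.map φ ≠ 0 := by
    intro hz
    apply hgi
    rw [← ZMod.intCast_zmod_eq_zero_iff_dvd]
    have := congrArg (fun q => Polynomial.coeff q i) hz
    simpa [Polynomial.coeff_map] using this
  have hhmne : h.map φ ≠ 0 := by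
    intro hz
    apply hhj
    rw [← ZMod.intCast_zmod_eq_zero_iff_dvd]
    have := congrArg (fun q => Polynomial.coeff q j) hz
    simpa [Polynomial.coeff_map] using this
  have hij : i + j = r := by
    have := congrArg Polynomial.natDegree hmap
    rw [Polynomial.natDegree_mul hgmne hhmne, hgnd, hhnd] at this
    rw [this]
    rw [Polynomial.natDegree_C_mul (by simpa using hpbar), natDegree_X_pow]
  -- edge coefficients
  set m := g.natDegree with hm
  set n := h.natDegree with hn
  have htop : g.coeff m * h.coeff n = (a:ℤ) := by
    have hcm := Polynomial.coeff_mul_degree_add_degree g h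
    rw [hgh', show g.natDegree + h.natDegree = 2*r from hdegsum,
      Fpoly_coeff_two_r a p r hr] at hcm
    exact hcm.symm
  have hbot : g.coeff 0 * h.coeff 0 = (a:ℤ) := by
    rw [← Polynomial.mul_coeff_zero, hgh', Fpoly_coeff_zero a p r hr]
  -- exactly-one divisibility at each end
  have hnotboth_top : ¬ ((a:ℤ) ∣ g.coeff m ∧ (a:ℤ) ∣ h.coeff n) := by
    rintro ⟨d1, d2⟩
    exact hsqnd (by rw [sq]; nth_rewrite 3 [← htop]; exact mul_dvd_mul d1 d2)
  have hnotboth_bot : ¬ ((a:ℤ) ∣ g.coeff 0 ∧ (a:ℤ) ∣ h.coeff 0) := by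
    rintro ⟨d1, d2⟩
    exact hsqnd (by rw [sq]; nth_rewrite 3 [← hbot]; exact mul_dvd_mul d1 d2)
  have hone_top : (a:ℤ) ∣ g.coeff m ∨ (a:ℤ) ∣ h.coeff n :=
    hprime.dvd_mul.mp (show (a:ℤ) ∣ g.coeff m * h.coeff n by rw [htop])
  have hone_bot : (a:ℤ) ∣ g.coeff 0 ∨ (a:ℤ) ∣ h.coeff 0 :=
    hprime.dvd_mul.mp (show (a:ℤ) ∣ g.coeff 0 * h.coeff 0 by rw [hbot])
  -- from excluded divisibility to index identification
  have hidx : ∀ (q : ℤ[X]) (iq k : ℕ), (∀ l, l ≠ iq → (a:ℤ) ∣ q.coeff l) →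
      ¬ (a:ℤ) ∣ q.coeff k → k = iq := by
    intro q iq k hall hnd
    by_contra hne
    exact hnd (hall k hne)
  -- case analysis
  have main : ∃ ε : ℤ, (ε = 1 ∨ ε = -1) ∧ ((a:ℤ)^2 ∣ (-(2*(a:ℤ)+p) - ε)) := by
    by_cases hgm : (a:ℤ) ∣ g.coeff m
    · by_cases hg0 : (a:ℤ) ∣ g.coeff 0
      · -- h has units at both ends: n = j and 0 = j, so n = 0, contradiction
        exfalso
        have hh0 : ¬ (a:ℤ) ∣ h.coeff 0 := fun d => hnotboth_bot ⟨hg0, d⟩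
        have hhn : ¬ (a:ℤ) ∣ h.coeff n := fun d => hnotboth_top ⟨hgm, d⟩
        have e1 := hidx h j n hhk hhn
        have e2 := hidx h j 0 hhk hh0
        omega
      · -- main case: i = 0, j = r, n = r, m = r
        have hi0 : i = 0 := (hidx g i 0 hgk hg0).symm
        have hjr' : j = r := by omega
        have hhn : ¬ (a:ℤ) ∣ h.coeff n := fun d => hnotboth_top ⟨hgm, d⟩
        have hnr : n = r := by have := hidx h j n hhk hhn; omega
        have hmr : m = r := by omega
        apply main_case ha hr g h hgh' hg0
        · intro k hk; exact hgk k (by omega)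
        · rw [← hjr']; exact hhj
        · intro k hk; exact hhk k (by omega)
        · omega
        · omega
    · -- symmetric: swap g and h
      have hi_m : m = i := hidx g i m hgk hgm
      have hhn : (a:ℤ) ∣ h.coeff n := hone_top.resolve_left hgm
      have hg0 : (a:ℤ) ∣ g.coeff 0 := by
        by_contra hg0
        have : (0 : ℕ) = i := hidx g i 0 hgk hg0
        omega
      have hh0 : ¬ (a:ℤ) ∣ h.coeff 0 := fun d => hnotboth_bot ⟨hg0, d⟩
      have hj0 : j = 0 := (hidx h j 0 hhk hh0).symm
      have hir' : i = r := by omega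
      have hmr : m = r := by omega
      have hnr : n = r := by omega
      apply main_case ha hr h g (by rw [← hgh']; ring) hh0
      · intro k hk; exact hhk k (by omega)
      · rw [← hir']; exact hgi
      · intro k hk; exact hgk k (by omega)
      · omega
      · omega
  obtain ⟨ε, hε, hdvd⟩ := main
  rcases hε with rfl | rfl
  · apply h2
    obtain ⟨k, hk⟩ := hdvd
    exact ⟨-k, by linarith [hk]⟩
  · apply h1
    obtain ⟨k, hk⟩ := hdvd
    exact ⟨-k, by linarith [hk]⟩

end Big

/-- Let `a` be a prime and `p` an integer with `p ≢ 0 (mod a)`,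
`p ≢ -2a+1 (mod a²)` and `p ≢ -2a-1 (mod a²)`.  Then for every positive integer `r`
the polynomial `a·t^{2r} - (2a+p)·t^r + a` is irreducible in `ℚ[t]`. -/
theorem polynomial_for_torsion_irreducible
    (a : ℕ) (ha : a.Prime) (p : ℤ)
    (h0 : ¬ (p ≡ 0 [ZMOD (a : ℤ)]))
    (h1 : ¬ (p ≡ -2 * (a : ℤ) + 1 [ZMOD ((a : ℤ) ^ 2)]))
    (h2 : ¬ (p ≡ -2 * (a : ℤ) - 1 [ZMOD ((a : ℤ) ^ 2)])) :
    ∀ r : ℕ, 0 < r →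
      Irreducible (C (a : ℚ) * X ^ (2 * r) - C (2 * (a : ℚ) + (p : ℚ)) * X ^ r + C (a : ℚ)) := by
  intro r hr
  have h0' : ¬ (a:ℤ) ∣ p := fun hd => h0 ((Int.modEq_zero_iff_dvd).mpr hd)
  have h1' : ¬ (a:ℤ)^2 ∣ (p - (-2*(a:ℤ)+1)) := by
    intro hd
    exact h1 ((Int.modEq_iff_dvd).mpr (by simpa using (dvd_neg.mpr hd)))
  have h2' : ¬ (a:ℤ)^2 ∣ (p - (-2*(a:ℤ)-1)) := by
    intro hd
    exact h2 ((Int.modEq_iff_dvd).mpr (by simpa using (dvd_neg.mpr hd)))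
  have hirr := Fpoly_irreducible_int ha hr h0' h1' h2'
  have hprim : (Fpoly a p r).IsPrimitive := by
    intro c hc
    have := not_unit_const_factor ha hr h0' (C c) hc (Polynomial.natDegree_C c)
    exact Polynomial.isUnit_C.mp this
  have hQ := (Polynomial.IsPrimitive.Int.irreducible_iff_irreducible_map_cast hprim).mp hirr
  have heq : (Fpoly a p r).map (Int.castRingHom ℚ) =
      C (a : ℚ) * X ^ (2 * r) - C (2 * (a : ℚ) + (p : ℚ)) * X ^ r + C (a : ℚ) := by
    unfold Fpoly
    simp only [Polynomial.map_add, Polynomial.map_sub, Polynomial.map_mul, Polynomial.map_pow,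
      Polynomial.map_C, Polynomial.map_X]
    norm_cast
  rwa [heq] at hQ
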